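/- Let p be a prime number and D a positive integer such that all p numbers p, p + D, p + 2D, …, p + (p-1)D are prime. Then every prime p' < p divides D. -/

import Mathlib

/-- Corollary 5: If the `p` numbers `p, p + D, …, p + (p-1)D` are all
prime, then every prime `p' < p` divides `D`. -/
theorem exceptional_tuple_forces_divisibility (p D : ℕ) (hp : p.Prime) (hD : 0 < D)
    (h : ∀ i : ℕ, i < p → Nat.Prime (p + i * D)) :
    ∀ p' : ℕ, p'.Prime → p' < p → p' ∣ D := by
  intro p' hp' hlt
  by_contra hnd
  haveI : Fact p'.Prime := ⟨hp'⟩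
  have hD0 : (D : ZMod p') ≠ 0 := fun h0 =>
    hnd ((ZMod.natCast_eq_zero_iff D p').mp h0)
  set i := (-(p : ZMod p') * (D : ZMod p')⁻¹).val with hi
  have hiP : i < p' := ZMod.val_lt _
  have hdiv : (p' : ℕ) ∣ p + i * D := by
    have hz : ((p + i * D : ℕ) : ZMod p') = 0 := by
      push_cast
      rw [hi, ZMod.natCast_val, ZMod.cast_id]
      field_simp
      ring
    exact (ZMod.natCast_eq_zero_iff _ _).mp hz
  have hprime := h i (hiP.trans hlt)
  have heq := (Nat.prime_dvd_prime_iff_eq hp' hprime).mp hdiv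
  omega
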